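/- Let W be a group, W' a subgroup of W, and K a normal subgroup of W contained in W'. Let G' be a group with a W'-action and G = Ind_{W'}^{W} G' with its translation W-action. If ĝ, ĥ ∈ Z¹(W, G) are two 1-cocycles such that ĝ(γ)(1) = ĥ(γ)(1) for all γ ∈ K, then the restrictions of ĝ and ĥ to K are cohomologous: there exists k ∈ G with ĥ(γ) = k * ĝ(γ) * (γ • k)⁻¹ for all γ ∈ K. -/

import Mathlib

/-- Let `W' ≤ W`, `K` a normal subgroup of `W` contained in `W'`, `G'` a
group with a `W'`-action, and `G = Ind_{W'}^{W} G'` with its translation `W`-action.  If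
`ĝ, ĥ ∈ Z¹(W, G)` satisfy `ĝ γ 1 = ĥ γ 1` for all `γ ∈ K`, then the restrictions of `ĝ`
and `ĥ` to `K` are cohomologous: there is `k ∈ G` with `ĥ γ = k * ĝ γ * (γ • k)⁻¹` on `K`. -/
theorem stmt11 {W G' : Type*} [Group W] [Group G']
    (W' : Subgroup W) [MulDistribMulAction W' G'] (K : Subgroup W)
    (hKnorm : K.Normal) (hKW' : K ≤ W')
    (g h : W → W → G')
    (hgInd : ∀ v : W, ∀ (u : W') (w : W), g v (↑u * w) = u • g v w)
    (hgCoc : ∀ v w x : W, g (v * w) x = g v x * g w (x * v))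
    (hhInd : ∀ v : W, ∀ (u : W') (w : W), h v (↑u * w) = u • h v w)
    (hhCoc : ∀ v w x : W, h (v * w) x = h v x * h w (x * v))
    (hagree : ∀ γ ∈ K, g γ 1 = h γ 1) :
    ∃ k : W → G', (∀ (u : W') (w : W), k (↑u * w) = u • k w) ∧
      ∀ γ ∈ K, ∀ w, h γ w = k w * g γ w * (k (w * γ))⁻¹ := by
  classical
  set r : W → W := fun w => (Quotient.mk (QuotientGroup.rightRel W') w).out with hr
  have hr_mem : ∀ w : W, w * (r w)⁻¹ ∈ W' := fun w =>
    QuotientGroup.rightRel_apply.mp (Quotient.mk_out w)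
  have hr_eq : ∀ (u : W') (w : W), r (↑u * w) = r w := by
    intro u w
    have : Quotient.mk (QuotientGroup.rightRel W') (↑u * w)
        = Quotient.mk (QuotientGroup.rightRel W') w := by
      refine Quotient.sound (QuotientGroup.rightRel_apply.mpr ?_)
      have : w * (↑u * w)⁻¹ = (↑u)⁻¹ := by group
      rw [this]; exact inv_mem u.2
    simp only [hr, this]
  set k₀ : W → G' := fun w => (h w 1)⁻¹ * g w 1 with hk₀
  set uE : W → W' := fun w => ⟨w * (r w)⁻¹, hr_mem w⟩ with huE
  set k : W → G' := fun w => uE w • k₀ (r w) with hk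
  have hdec : ∀ w : W, w = ↑(uE w) * r w := by
    intro w; simp [huE]
  refine ⟨k, ?_, ?_⟩
  · intro u w
    have h1 : uE (↑u * w) = u * uE w := by
      ext; simp [huE, hr_eq u w, mul_assoc]
    simp only [hk, hr_eq u w, h1, mul_smul]
  · intro γ hγ w
    set ρ := r w with hρ
    have hdw := hdec w
    -- the conjugate of γ by ρ
    have hδK : ρ * γ * ρ⁻¹ ∈ K := hKnorm.conj_mem γ hγ ρ
    set δ : W' := ⟨ρ * γ * ρ⁻¹, hKW' hδK⟩ with hδ
    have hδρ : (↑δ : W) * ρ = ρ * γ := by simp [hδ, mul_assoc]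
    -- r (w * γ) = ρ
    have hrwγ : r (w * γ) = ρ := by
      have hmem : w * γ * w⁻¹ ∈ W' := hKW' (hKnorm.conj_mem γ hγ w)
      have : w * γ = ↑(⟨w * γ * w⁻¹, hmem⟩ : W') * w := by simp [mul_assoc]
      rw [this, hr_eq]
    have huwγ : uE (w * γ) = uE w * δ := by
      ext
      simp only [huE, hrwγ, hδ, Subgroup.coe_mul]
      rw [← hρ]
      group
    -- key pointwise identity at the representative ρ
    have key : h γ ρ = k₀ ρ * g γ ρ * (δ • k₀ ρ)⁻¹ := by
      have hg1 : g (ρ * γ) 1 = g ρ 1 * g γ ρ := by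
        have := hgCoc ρ γ 1; rwa [one_mul] at this
      have hh1 : h (ρ * γ) 1 = h ρ 1 * h γ ρ := by
        have := hhCoc ρ γ 1; rwa [one_mul] at this
      have hg2 : g (ρ * γ) 1 = g (↑δ) 1 * (δ • g ρ 1) := by
        rw [← hδρ, hgCoc (↑δ) ρ 1, one_mul]
        congr 1
        have := hgInd ρ δ 1; rwa [mul_one] at this
      have hh2 : h (ρ * γ) 1 = h (↑δ) 1 * (δ • h ρ 1) := by
        rw [← hδρ, hhCoc (↑δ) ρ 1, one_mul]
        congr 1
        have := hhInd ρ δ 1; rwa [mul_one] at this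
      have hagr : g (↑δ) 1 = h (↑δ) 1 := hagree _ hδK
      have e1 : g γ ρ = (g ρ 1)⁻¹ * (g (↑δ) 1 * (δ • g ρ 1)) := by
        rw [← hg2, hg1]; group
      have e2 : h γ ρ = (h ρ 1)⁻¹ * (h (↑δ) 1 * (δ • h ρ 1)) := by
        rw [← hh2, hh1]; group
      rw [e1, e2, hk₀, hagr]
      simp only [smul_mul', smul_inv']
      group
    -- transport along w = uE w * ρ
    calc h γ w = h γ (↑(uE w) * ρ) := by rw [← hdw]
      _ = uE w • h γ ρ := hhInd γ (uE w) ρ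
      _ = uE w • (k₀ ρ * g γ ρ * (δ • k₀ ρ)⁻¹) := by rw [key]
      _ = k w * g γ w * (k (w * γ))⁻¹ := by
          simp only [smul_mul', smul_inv', hk, hrwγ, huwγ, hρ, mul_smul]
          rw [hdw, hgInd γ (uE w) ρ]
          rw [← hdw]
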